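/- For natural numbers n, m ≥ 1 and 0 ≤ h < m, the finite Łukasiewicz chain Ł_n embeds into Ł_{m,h} = Γ(ℤ ×_lex ℤ, (m,h)) if and only if n divides gcd(m, h). -/

import Mathlib

/-- The interval `[0, u]` in a totally ordered abelian group: the universe of
the Wajsberg hoop `Γ(G, u)`. -/
def Gam {G : Type*} [AddCommGroup G] [LinearOrder G] [IsOrderedAddMonoid G] (u : G) : Type _ :=
  {x : G // 0 ≤ x ∧ x ≤ u}

/-- Product `a·b = max(a+b-u, 0)` of `Γ(G,u)`. -/
def hmul {G : Type*} [AddCommGroup G] [LinearOrder G] [IsOrderedAddMonoid G] {u : G} (a b : Gam u) : Gam u :=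
  ⟨max (a.1 + b.1 - u) 0, le_max_right _ _,
    max_le (sub_le_iff_le_add.mpr (add_le_add a.2.2 b.2.2)) (a.2.1.trans a.2.2)⟩

/-- Residuum `a→b = min(u-a+b, u)` of `Γ(G,u)`. -/
def himp {G : Type*} [AddCommGroup G] [LinearOrder G] [IsOrderedAddMonoid G] {u : G} (a b : Gam u) : Gam u :=
  ⟨min (u - a.1 + b.1) u,
    le_min (add_nonneg (sub_nonneg.mpr a.2.2) b.2.1) (a.2.1.trans a.2.2),
    min_le_right _ _⟩

/-- Top element (monoid unit) of `Γ(G,u)`. -/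
def hone {G : Type*} [AddCommGroup G] [LinearOrder G] [IsOrderedAddMonoid G] (u : G) (hu : 0 ≤ u) : Gam u :=
  ⟨u, hu, le_rfl⟩

/-- An embedding of hoops: an injective map preserving `·`, `→` and `1`. -/
structure IsHoopEmbedding {A B : Type*} (mA : A → A → A) (iA : A → A → A) (oA : A)
    (mB : B → B → B) (iB : B → B → B) (oB : B) (f : A → B) : Prop where
  inj : Function.Injective f
  map_mul : ∀ x y, f (mA x y) = mB (f x) (f y)
  map_imp : ∀ x y, f (iA x y) = iB (f x) (f y)
  map_one : f oA = oB

theorem lex_nonneg (a b : ℤ) (h : 0 < a) : (0 : ℤ ×ₗ ℤ) ≤ toLex (a, b) :=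
  Prod.Lex.le_iff.mpr (Or.inl h)

/-- Any hoop embedding between `Γ` intervals is monotone. -/
theorem gam_mono {G H : Type*} [AddCommGroup G] [LinearOrder G] [IsOrderedAddMonoid G]
    [AddCommGroup H] [LinearOrder H] [IsOrderedAddMonoid H]
    {uG : G} {uH : H} (hG : 0 ≤ uG) (hH : 0 ≤ uH) (f : Gam uG → Gam uH)
    (hf : IsHoopEmbedding hmul himp (hone uG hG) hmul himp (hone uH hH) f) :
    ∀ x y : Gam uG, x.1 ≤ y.1 → (f x).1 ≤ (f y).1 := by
  intro x y hxy
  have h1 : himp x y = hone uG hG := by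
    apply Subtype.ext
    show min (uG - x.1 + y.1) uG = uG
    have hle : uG ≤ uG - x.1 + y.1 := by
      have h2 : uG - x.1 + y.1 = uG + (y.1 - x.1) := by abel
      rw [h2, le_add_iff_nonneg_right]
      exact sub_nonneg.mpr hxy
    exact min_eq_right hle
  have h2 := hf.map_imp x y
  rw [h1, hf.map_one] at h2
  have h3 : min (uH - (f x).1 + (f y).1) uH = uH := (congrArg Subtype.val h2).symm
  have h4 : uH ≤ uH - (f x).1 + (f y).1 := min_eq_right_iff.mp h3
  have h5 : uH - (f x).1 + (f y).1 = uH + ((f y).1 - (f x).1) := by abel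
  rw [h5, le_add_iff_nonneg_right] at h4
  exact sub_nonneg.mp h4

/-- Core of the forward direction: an embedding of `Ł_n` forces `n • c = uH`. -/
theorem gam_forward {H : Type*} [AddCommGroup H] [LinearOrder H] [IsOrderedAddMonoid H] {uH : H} (hH : 0 ≤ uH)
    (n : ℕ) (hn : 1 ≤ n) (f : Gam ((n : ℤ)) → Gam uH)
    (hf : IsHoopEmbedding hmul himp (hone _ (Int.natCast_nonneg n)) hmul himp (hone uH hH) f) :
    ∃ c : H, n • c = uH := by
  have hN : (0 : ℤ) < (n : ℤ) := by exact_mod_cast hn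
  have h1n : (1 : ℤ) ≤ (n : ℤ) := by exact_mod_cast hn
  set E0 : Gam ((n : ℤ)) := ⟨0, le_rfl, hN.le⟩ with hE0
  set E1 : Gam ((n : ℤ)) := ⟨1, zero_le_one, h1n⟩ with hE1
  -- top element
  have htop : (⟨(n : ℤ), Int.natCast_nonneg n, le_rfl⟩ : Gam ((n : ℤ)))
      = hone ((n : ℤ)) (Int.natCast_nonneg n) := rfl
  -- f E0 = 0
  have hz : (f E0).1 = 0 := by
    have hmm : hmul E0 E0 = E0 := by
      apply Subtype.ext
      show max ((0 : ℤ) + 0 - (n : ℤ)) 0 = 0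
      omega
    have h1 := hf.map_mul E0 E0
    rw [hmm] at h1
    have h2 : (f E0).1 = max ((f E0).1 + (f E0).1 - uH) 0 := congrArg Subtype.val h1
    rcases max_cases ((f E0).1 + (f E0).1 - uH) 0 with ⟨he, _⟩ | ⟨he, _⟩
    · exfalso
      have h3 : (f E0).1 = (f E0).1 + (f E0).1 - uH := h2.trans he
      have h4 : (f E0).1 - uH = ((f E0).1 + (f E0).1 - uH) - (f E0).1 := by abel
      rw [← h3, sub_self] at h4
      have h5 : (f E0).1 = uH := sub_eq_zero.mp h4
      have h6 : f E0 = hone uH hH := Subtype.ext h5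
      have h7 : E0 = hone ((n : ℤ)) (Int.natCast_nonneg n) := hf.inj (h6.trans hf.map_one.symm)
      have h8 : (0 : ℤ) = (n : ℤ) := congrArg Subtype.val h7
      omega
    · exact h2.trans he
  set c : H := (f E1).1 with hc
  have hc0 : 0 ≤ c := (f E1).2.1
  -- f (n-1) = uH - c
  have fco : ∀ p q, (f ⟨(n : ℤ) - 1, p, q⟩).1 = uH - c := by
    intro p q
    have hEq : himp E1 E0 = (⟨(n : ℤ) - 1, p, q⟩ : Gam ((n : ℤ))) := by
      apply Subtype.ext
      show min ((n : ℤ) - 1 + 0) (n : ℤ) = (n : ℤ) - 1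
      omega
    have h1 := hf.map_imp E1 E0
    rw [hEq] at h1
    have h2 : (f ⟨(n : ℤ) - 1, p, q⟩).1 = min (uH - c + (f E0).1) uH := congrArg Subtype.val h1
    rw [hz, add_zero] at h2
    rw [h2]
    exact min_eq_left (sub_le_self uH hc0)
  -- step
  have step : ∀ (k : ℤ) (p0 : 0 ≤ k) (q0 : k ≤ (n:ℤ)) (p1 : 0 ≤ k + 1) (q1 : k + 1 ≤ (n:ℤ)),
      (f ⟨k + 1, p1, q1⟩).1 = (f ⟨k, p0, q0⟩).1 + c := by
    intro k p0 q0 p1 q1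
    have hEq : himp (⟨k + 1, p1, q1⟩ : Gam ((n:ℤ))) ⟨k, p0, q0⟩
        = (⟨(n : ℤ) - 1, by omega, by omega⟩ : Gam ((n:ℤ))) := by
      apply Subtype.ext
      show min ((n : ℤ) - (k + 1) + k) (n : ℤ) = (n : ℤ) - 1
      omega
    have h1 := hf.map_imp ⟨k + 1, p1, q1⟩ ⟨k, p0, q0⟩
    rw [hEq] at h1
    have h2 : min (uH - (f ⟨k + 1, p1, q1⟩).1 + (f ⟨k, p0, q0⟩).1) uH = uH - c := by
      rw [← fco (by omega) (by omega)]
      exact (congrArg Subtype.val h1).symm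
    set A : H := (f ⟨k + 1, p1, q1⟩).1 with hA
    set B : H := (f ⟨k, p0, q0⟩).1 with hB
    have hle : B ≤ A := gam_mono (Int.natCast_nonneg n) hH f hf _ _ (by show k ≤ k + 1; omega)
    have h3 : uH - A + B ≤ uH := by
      have h4 : uH - A + B = uH + (B - A) := by abel
      rw [h4, add_le_iff_nonpos_right]
      exact sub_nonpos.mpr hle
    rw [min_eq_left h3] at h2
    have h5 : B + c - A = (uH - A + B) - (uH - c) := by abel
    rw [h2, sub_self] at h5
    exact (sub_eq_zero.mp h5).symm
  -- induction
  have key : ∀ (k : ℕ) (hk : (k : ℤ) ≤ (n : ℤ)),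
      (f ⟨(k : ℤ), Int.natCast_nonneg k, hk⟩).1 = k • c := by
    intro k
    induction k with
    | zero =>
      intro hk
      have : (⟨((0 : ℕ) : ℤ), Int.natCast_nonneg 0, hk⟩ : Gam ((n:ℤ))) = E0 :=
        Subtype.ext (by norm_num)
      rw [this, hz, zero_smul]
    | succ k ih =>
      intro hk
      have hk' : (k : ℤ) ≤ (n : ℤ) := by push_cast at hk ⊢; omega
      have he : (⟨((k + 1 : ℕ) : ℤ), Int.natCast_nonneg _, hk⟩ : Gam ((n:ℤ)))
          = ⟨(k : ℤ) + 1, by omega, by push_cast at hk ⊢; omega⟩ :=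
        Subtype.ext (by push_cast; ring)
      rw [he, step (k : ℤ) (Int.natCast_nonneg k) hk' (by omega)
        (by push_cast at hk ⊢; omega), ih hk', succ_nsmul]
  refine ⟨c, ?_⟩
  have h1 := key n le_rfl
  rw [htop, hf.map_one] at h1
  exact h1.symm

/-- for `n, m ≥ 1` and `0 ≤ h < m`, the chain `Ł_n` embeds into
`Ł_{m,h} = Γ(ℤ ×ₗ ℤ, (m,h))` if and only if `n ∣ gcd(m,h)`. -/
theorem luk_chain_embeds_into_Lmh_iff (n m h : ℕ) (hn : 1 ≤ n) (hm : 1 ≤ m) (hh : h < m) :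
    (∃ f : Gam ((n : ℤ)) → Gam (toLex ((m : ℤ), (h : ℤ))),
        IsHoopEmbedding hmul himp (hone _ (Int.natCast_nonneg n))
          hmul himp (hone _ (lex_nonneg _ _ (by exact_mod_cast hm))) f)
      ↔ n ∣ Nat.gcd m h := by
  constructor
  · rintro ⟨f, hf⟩
    obtain ⟨c, hc⟩ := gam_forward (lex_nonneg _ _ (by exact_mod_cast hm)) n hn f hf
    have hc' : (n • (ofLex c).1, n • (ofLex c).2) = ((m : ℤ), (h : ℤ)) := congrArg ofLex hc
    have h1 : (n : ℤ) * (ofLex c).1 = (m : ℤ) := by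
      have := congrArg Prod.fst hc'
      simpa [nsmul_eq_mul] using this
    have h2 : (n : ℤ) * (ofLex c).2 = (h : ℤ) := by
      have := congrArg Prod.snd hc'
      simpa [nsmul_eq_mul] using this
    refine Nat.dvd_gcd ?_ ?_
    · have : (n : ℤ) ∣ (m : ℤ) := ⟨(ofLex c).1, h1.symm⟩
      exact_mod_cast this
    · have : (n : ℤ) ∣ (h : ℤ) := ⟨(ofLex c).2, h2.symm⟩
      exact_mod_cast this
  · intro hd
    obtain ⟨a, ha⟩ := hd.trans (Nat.gcd_dvd_left m h)
    obtain ⟨b, hb⟩ := hd.trans (Nat.gcd_dvd_right m h)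
    have ha0 : 0 < a := by
      rcases Nat.eq_zero_or_pos a with rfl | hp
      · omega
      · exact hp
    set g : ℤ → ℤ ×ₗ ℤ := fun t => toLex ((a : ℤ) * t, (b : ℤ) * t) with hg
    have hgmono : StrictMono g := by
      intro s t hst
      exact Prod.Lex.lt_iff.mpr
        (Or.inl (mul_lt_mul_of_pos_left hst (by exact_mod_cast ha0)))
    have hgn : g ((n : ℤ)) = toLex ((m : ℤ), (h : ℤ)) := by
      show toLex ((a : ℤ) * (n : ℤ), (b : ℤ) * (n : ℤ)) = toLex ((m : ℤ), (h : ℤ))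
      congr 1
      simp only [Prod.mk.injEq]
      constructor <;> push_cast [ha, hb] <;> ring
    have hg0 : g 0 = 0 := by
      show toLex ((a : ℤ) * 0, (b : ℤ) * 0) = toLex ((0 : ℤ), (0 : ℤ))
      norm_num
    have hadd : ∀ x y z : ℤ, g (x + y - z) = g x + g y - g z := by
      intro x y z
      show toLex _ = toLex (((a:ℤ)*x + (a:ℤ)*y - (a:ℤ)*z), ((b:ℤ)*x + (b:ℤ)*y - (b:ℤ)*z))
      congr 1
      simp only [Prod.mk.injEq]
      constructor <;> ring
    refine ⟨fun x => ⟨g x.1, hg0 ▸ hgmono.monotone x.2.1, hgn ▸ hgmono.monotone x.2.2⟩,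
      ?_, ?_, ?_, ?_⟩
    · intro x y hxy
      exact Subtype.ext (hgmono.injective (congrArg Subtype.val hxy))
    · intro x y
      apply Subtype.ext
      show g (max (x.1 + y.1 - (n : ℤ)) 0) = max (g x.1 + g y.1 - toLex ((m:ℤ),(h:ℤ))) 0
      rw [hgmono.monotone.map_max, hg0, hadd, hgn]
    · intro x y
      apply Subtype.ext
      show g (min ((n : ℤ) - x.1 + y.1) (n : ℤ))
          = min (toLex ((m:ℤ),(h:ℤ)) - g x.1 + g y.1) (toLex ((m:ℤ),(h:ℤ)))
      rw [hgmono.monotone.map_min]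
      have : g ((n : ℤ) - x.1 + y.1) = toLex ((m:ℤ),(h:ℤ)) - g x.1 + g y.1 := by
        have h1 : (n : ℤ) - x.1 + y.1 = (n : ℤ) + y.1 - x.1 := by ring
        rw [h1, hadd, hgn]
        abel
      rw [this, hgn]
    · apply Subtype.ext
      exact hgn
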